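/- An element a ∈ ℤ[j] with η(a) ≠ 0 is irreducible and not prime in ℤ[j] if and only if a is associated to (2^γ + 1) + j(2^γ − 1) or to (2^γ + 1) − j(2^γ − 1) for some natural number γ ≥ 0. -/

import Mathlib

namespace PerplexAux

def u (z : ℤ√1) : ℤ := z.re + z.im
def v (z : ℤ√1) : ℤ := z.re - z.im

lemma u_mul (z w : ℤ√1) : u (z * w) = u z * u w := by
  simp [u, Zsqrtd.re_mul, Zsqrtd.im_mul]; ring

lemma v_mul (z w : ℤ√1) : v (z * w) = v z * v w := by
  simp [v, Zsqrtd.re_mul, Zsqrtd.im_mul]; ring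

lemma parity (z : ℤ√1) : 2 ∣ u z - v z := ⟨z.im, by simp [u, v]; ring⟩

lemma ext_uv {z w : ℤ√1} (hu : u z = u w) (hv : v z = v w) : z = w := by
  simp only [u, v] at hu hv
  ext <;> omega

lemma exists_uv {s t : ℤ} (h : 2 ∣ s - t) : ∃ c : ℤ√1, u c = s ∧ v c = t := by
  obtain ⟨k, hk⟩ := h
  exact ⟨⟨t + k, k⟩, by simp [u]; omega, by simp [v]⟩

lemma dvd_iff (a b : ℤ√1) :
    a ∣ b ↔ ∃ s t : ℤ, 2 ∣ s - t ∧ u b = u a * s ∧ v b = v a * t := by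
  constructor
  · rintro ⟨c, rfl⟩
    exact ⟨u c, v c, parity c, u_mul a c, v_mul a c⟩
  · rintro ⟨s, t, hst, hub, hvb⟩
    obtain ⟨c, hcs, hct⟩ := exists_uv hst
    exact ⟨c, ext_uv (by rw [u_mul, hcs, hub]) (by rw [v_mul, hct, hvb])⟩

lemma u_one : u 1 = 1 := by simp [u]
lemma v_one : v 1 = 1 := by simp [v]

lemma isUnit_iff {a : ℤ√1} :
    IsUnit a ↔ (u a = 1 ∨ u a = -1) ∧ (v a = 1 ∨ v a = -1) := by
  constructor
  · intro h
    obtain ⟨s, t, _, hus, hvt⟩ := (dvd_iff a 1).1 h.dvd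
    rw [u_one] at hus; rw [v_one] at hvt
    exact ⟨Int.isUnit_iff.1 (IsUnit.of_mul_eq_one _ hus.symm),
      Int.isUnit_iff.1 (IsUnit.of_mul_eq_one _ hvt.symm)⟩
  · rintro ⟨hu, hv⟩
    apply isUnit_of_dvd_one
    rw [dvd_iff]
    refine ⟨u a, v a, parity a, ?_, ?_⟩
    · rw [u_one]; rcases hu with h | h <;> rw [h] <;> ring
    · rw [v_one]; rcases hv with h | h <;> rw [h] <;> ring


-- a ∣ b ↔ u a ∣ u b, when v a = ±1
lemma dvd_iff_of_v {a : ℤ√1} (hv : v a = 1 ∨ v a = -1) (b : ℤ√1) :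
    a ∣ b ↔ u a ∣ u b := by
  constructor
  · rintro ⟨c, rfl⟩; exact ⟨u c, u_mul a c⟩
  · rintro ⟨s, hs⟩
    rw [dvd_iff]
    refine ⟨s, v a * v b, ?_, hs, by rcases hv with h | h <;> rw [h] <;> ring⟩
    -- parity: 2 ∣ s - v a * v b
    obtain ⟨m, hm⟩ : 2 ∣ u a - v a := parity a
    obtain ⟨n, hn⟩ : 2 ∣ u b - v b := parity b
    have h1 : u b - s = 2 * (m * s) + (v a - 1) * s := by linear_combination hs + s * hm
    rcases hv with h | h <;> rw [h] at h1 ⊢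
    · simp only [one_mul]; omega
    · have h2 : s - (-1 * v b) = (s - u b) + (u b - v b) + 2 * v b := by ring
      have h3 : u b - s = 2 * (m * s) + (-1 - 1) * s := h1
      omega

lemma dvd_iff_of_u {a : ℤ√1} (hu : u a = 1 ∨ u a = -1) (b : ℤ√1) :
    a ∣ b ↔ v a ∣ v b := by
  constructor
  · rintro ⟨c, rfl⟩; exact ⟨v c, v_mul a c⟩
  · rintro ⟨s, hs⟩
    rw [dvd_iff]
    refine ⟨u a * u b, s, ?_, by rcases hu with h | h <;> rw [h] <;> ring, hs⟩
    obtain ⟨m, hm⟩ : 2 ∣ u a - v a := parity a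
    obtain ⟨n, hn⟩ : 2 ∣ u b - v b := parity b
    have h1 : v b - s = 2 * (-m * s) + (u a - 1) * s := by linear_combination hs - s * hm
    rcases hu with h | h <;> rw [h] at h1 ⊢
    · simp only [one_mul]; omega
    · have h2 : (-1 * u b) - s = (u b - v b) + (v b - s) - 2 * u b := by ring
      have h3 : v b - s = 2 * (-m * s) + (-1 - 1) * s := h1
      omega

lemma ne_zero_of_u {a : ℤ√1} (h : u a ≠ 0) : a ≠ 0 := by
  rintro rfl; exact h (by simp [u])

lemma prime_of_v {a : ℤ√1} (hp : Prime (u a)) (hv : v a = 1 ∨ v a = -1) : Prime a := by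
  refine ⟨ne_zero_of_u hp.ne_zero, ?_, ?_⟩
  · intro h
    exact hp.not_unit (Int.isUnit_iff.2 (isUnit_iff.1 h).1)
  · intro x y hxy
    rw [dvd_iff_of_v hv] at hxy ⊢
    rw [dvd_iff_of_v hv]
    rw [u_mul] at hxy
    exact hp.2.2 _ _ hxy

lemma prime_of_u {a : ℤ√1} (hp : Prime (v a)) (hu : u a = 1 ∨ u a = -1) : Prime a := by
  have hane : a ≠ 0 := by rintro rfl; exact hp.ne_zero (by simp [v])
  refine ⟨hane, ?_, ?_⟩
  · intro h
    exact hp.not_unit (Int.isUnit_iff.2 (isUnit_iff.1 h).2)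
  · intro x y hxy
    rw [dvd_iff_of_u hu] at hxy ⊢
    rw [dvd_iff_of_u hu]
    rw [v_mul] at hxy
    exact hp.2.2 _ _ hxy

lemma odd_dvd_pow2 {m : ℤ} {n : ℕ} (hm : ¬ 2 ∣ m) (h : m ∣ 2 ^ n) : m = 1 ∨ m = -1 := by
  have h1 : m.natAbs ∣ 2 ^ n := by
    have := Int.natAbs_dvd_natAbs.2 h
    rwa [Int.natAbs_pow] at this
  have hodd : ¬ 2 ∣ m.natAbs := by omega
  have h2 : Nat.Coprime m.natAbs 2 :=
    ((Nat.prime_two.coprime_iff_not_dvd).2 hodd).symm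
  have h3 : m.natAbs = 1 := (h2.pow_right n).eq_one_of_dvd h1
  rcases Int.natAbs_eq m with h4 | h4 <;> omega

lemma not_prime_of_even {a : ℤ√1} (hu : 2 ∣ u a) (hv : 2 ∣ v a)
    (hu0 : u a ≠ 0) (hv0 : v a ≠ 0) : ¬ Prime a := by
  intro hp
  have hmul : (⟨1, 1⟩ : ℤ√1) * ⟨1, -1⟩ = 0 := by
    ext <;> simp [Zsqrtd.re_mul, Zsqrtd.im_mul]
  have hx : ¬ a ∣ (⟨1, 1⟩ : ℤ√1) := by
    rw [dvd_iff]
    rintro ⟨s, t, hst, h1, h2⟩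
    have hu1 : u (⟨1, 1⟩ : ℤ√1) = 2 := by simp [u]
    have hv1 : v (⟨1, 1⟩ : ℤ√1) = 0 := by simp [v]
    rw [hu1] at h1; rw [hv1] at h2
    have ht : t = 0 := by
      rcases mul_eq_zero.1 h2.symm with h | h
      · exact absurd h hv0
      · exact h
    obtain ⟨c, hc⟩ := hu
    have hs : 2 ∣ s := by omega
    obtain ⟨d, hd⟩ := hs
    have : (2 : ℤ) = 4 * (c * d) := by rw [h1, hc, hd]; ring
    omega
  have hy : ¬ a ∣ (⟨1, -1⟩ : ℤ√1) := by
    rw [dvd_iff]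
    rintro ⟨s, t, hst, h1, h2⟩
    have hu1 : u (⟨1, -1⟩ : ℤ√1) = 0 := by simp [u]
    have hv1 : v (⟨1, -1⟩ : ℤ√1) = 2 := by simp [v]
    rw [hu1] at h1; rw [hv1] at h2
    have hs : s = 0 := by
      rcases mul_eq_zero.1 h1.symm with h | h
      · exact absurd h hu0
      · exact h
    obtain ⟨c, hc⟩ := hv
    have ht : 2 ∣ t := by omega
    obtain ⟨d, hd⟩ := ht
    have : (2 : ℤ) = 4 * (c * d) := by rw [h2, hc, hd]; ring
    omega
  rcases hp.2.2 ⟨1, 1⟩ ⟨1, -1⟩ (by rw [hmul]; exact dvd_zero a) with h | h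
  · exact hx h
  · exact hy h

lemma irr_even {a : ℤ√1} {k l : ℕ} (hkl : k = 0 ∨ l = 0)
    (hu : u a = 2 ^ (k + 1)) (hv : v a = 2 ^ (l + 1)) : Irreducible a := by
  constructor
  · rw [isUnit_iff, hu]
    have h2 : (2 : ℤ) ∣ 2 ^ (k + 1) := dvd_pow_self 2 (Nat.succ_ne_zero k)
    rintro ⟨h | h, -⟩ <;> omega
  · intro z w hzw
    by_contra hcon
    push_neg at hcon
    obtain ⟨hz, hw⟩ := hcon
    have key : ∀ z w : ℤ√1, a = z * w → ¬ IsUnit z → 2 ∣ u z ∧ 2 ∣ v z := by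
      intro z w hzw hz
      have hdu : u z ∣ 2 ^ (k + 1) := by rw [← hu, hzw, u_mul]; exact Dvd.intro _ rfl
      have hdv : v z ∣ 2 ^ (l + 1) := by rw [← hv, hzw, v_mul]; exact Dvd.intro _ rfl
      obtain ⟨m, hm⟩ : 2 ∣ u z - v z := parity z
      by_cases he : 2 ∣ u z
      · exact ⟨he, by omega⟩
      · exfalso
        apply hz
        rw [isUnit_iff]
        refine ⟨odd_dvd_pow2 he hdu, odd_dvd_pow2 (by omega) hdv⟩
    obtain ⟨⟨cz, hcz⟩, ⟨dz, hdz⟩⟩ := key z w hzw hz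
    obtain ⟨⟨cw, hcw⟩, ⟨dw, hdw⟩⟩ := key w z (by rw [hzw, mul_comm]) hw
    have h4u : u a = 4 * (cz * cw) := by rw [hzw, u_mul, hcz, hcw]; ring
    have h4v : v a = 4 * (dz * dw) := by rw [hzw, v_mul, hdz, hdw]; ring
    rcases hkl with rfl | rfl
    · rw [hu] at h4u; norm_num at h4u; omega
    · rw [hv] at h4v; norm_num at h4v; omega

lemma pow2_form_u {a : ℤ√1} (hirr : Irreducible a) (hue : 2 ∣ u a) (hve : 2 ∣ v a)
    (hu0 : u a ≠ 0) : ∃ K : ℕ, 1 ≤ K ∧ (u a = 2 ^ K ∨ u a = -(2 ^ K)) := by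
  have key : ∀ q : ℕ, q.Prime → q ∣ (u a).natAbs → q = 2 := by
    intro q hq hqd
    by_contra hne
    have hqo : q % 2 = 1 := Nat.odd_iff.1 (hq.odd_of_ne_two hne)
    have hq2 : 2 ≤ q := hq.two_le
    have hdvd : (q : ℤ) ∣ u a :=
      dvd_trans (Int.natCast_dvd_natCast.2 hqd) (Int.natAbs_dvd.2 dvd_rfl)
    obtain ⟨c, hc⟩ := hdvd
    have hceven : 2 ∣ c := by
      rcases (Int.prime_two.dvd_mul).1 (hc ▸ hue) with h | h
      · exfalso; omega
      · exact h
    obtain ⟨e₁, he1u, he1v⟩ := exists_uv (s := (q : ℤ)) (t := 1) (by omega)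
    obtain ⟨e₂, he2u, he2v⟩ := exists_uv (s := c) (t := v a) (by omega)
    have hfac : a = e₁ * e₂ :=
      ext_uv (by rw [u_mul, he1u, he2u, hc]) (by rw [v_mul, he1v, he2v]; ring)
    rcases hirr.isUnit_or_isUnit hfac with h | h <;> rw [isUnit_iff] at h
    · rw [he1u] at h; rcases h.1 with h1 | h1 <;> omega
    · rw [he2u] at h; rcases h.1 with h1 | h1 <;> omega
  have hn0 : (u a).natAbs ≠ 0 := by omega
  have hform := Nat.eq_prime_pow_of_unique_prime_dvd hn0 fun {d} hd hdd => key d hd hdd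
  set K := (u a).natAbs.primeFactorsList.length with hKdef
  refine ⟨K, ?_, ?_⟩
  · rcases Nat.eq_zero_or_pos K with h | h
    · rw [h, pow_zero] at hform; omega
    · omega
  · rcases Int.natAbs_eq (u a) with h | h
    · left; rw [h, hform]; push_cast; ring
    · right; rw [h, hform]; push_cast; ring

lemma pow2_form_v {a : ℤ√1} (hirr : Irreducible a) (hue : 2 ∣ u a) (hve : 2 ∣ v a)
    (hv0 : v a ≠ 0) : ∃ K : ℕ, 1 ≤ K ∧ (v a = 2 ^ K ∨ v a = -(2 ^ K)) := by
  have key : ∀ q : ℕ, q.Prime → q ∣ (v a).natAbs → q = 2 := by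
    intro q hq hqd
    by_contra hne
    have hqo : q % 2 = 1 := Nat.odd_iff.1 (hq.odd_of_ne_two hne)
    have hq2 : 2 ≤ q := hq.two_le
    have hdvd : (q : ℤ) ∣ v a :=
      dvd_trans (Int.natCast_dvd_natCast.2 hqd) (Int.natAbs_dvd.2 dvd_rfl)
    obtain ⟨c, hc⟩ := hdvd
    have hceven : 2 ∣ c := by
      rcases (Int.prime_two.dvd_mul).1 (hc ▸ hve) with h | h
      · exfalso; omega
      · exact h
    obtain ⟨e₁, he1u, he1v⟩ := exists_uv (s := 1) (t := (q : ℤ)) (by omega)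
    obtain ⟨e₂, he2u, he2v⟩ := exists_uv (s := u a) (t := c) (by omega)
    have hfac : a = e₁ * e₂ :=
      ext_uv (by rw [u_mul, he1u, he2u]; ring) (by rw [v_mul, he1v, he2v, hc])
    rcases hirr.isUnit_or_isUnit hfac with h | h <;> rw [isUnit_iff] at h
    · rw [he1v] at h; rcases h.2 with h1 | h1 <;> omega
    · rw [he2v] at h; rcases h.2 with h1 | h1 <;> omega
  have hn0 : (v a).natAbs ≠ 0 := by omega
  have hform := Nat.eq_prime_pow_of_unique_prime_dvd hn0 fun {d} hd hdd => key d hd hdd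
  set K := (v a).natAbs.primeFactorsList.length with hKdef
  refine ⟨K, ?_, ?_⟩
  · rcases Nat.eq_zero_or_pos K with h | h
    · rw [h, pow_zero] at hform; omega
    · omega
  · rcases Int.natAbs_eq (v a) with h | h
    · left; rw [h, hform]; push_cast; ring
    · right; rw [h, hform]; push_cast; ring

end PerplexAux

open PerplexAux in
/-- An element `a ∈ ℤ[j]` with `η(a) ≠ 0` is irreducible and not prime iff `a` is
associated to `(2^γ + 1) + j(2^γ − 1)` or to `(2^γ + 1) − j(2^γ − 1)` for some `γ ≥ 0`. -/
theorem irreducible_not_prime_iff_associated (a : ℤ√1) (ha : Zsqrtd.norm a ≠ 0) :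
    (Irreducible a ∧ ¬ Prime a) ↔
      ∃ γ : ℕ, Associated a ⟨2 ^ γ + 1, 2 ^ γ - 1⟩ ∨
        Associated a ⟨2 ^ γ + 1, -(2 ^ γ - 1)⟩ := by
  have hnorm : Zsqrtd.norm a = u a * v a := by
    simp only [Zsqrtd.norm_def, u, v]; ring
  have hu0 : u a ≠ 0 := fun h => ha (by rw [hnorm, h, zero_mul])
  have hv0 : v a ≠ 0 := fun h => ha (by rw [hnorm, h, mul_zero])
  constructor
  · rintro ⟨hirr, hnp⟩
    obtain ⟨m0, hm0⟩ := parity a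
    rcases Int.even_or_odd (u a) with ⟨r, hr⟩ | ⟨r, hr⟩
    · -- even case
      have hue2 : 2 ∣ u a := ⟨r, by omega⟩
      have hve2 : 2 ∣ v a := ⟨r - m0, by omega⟩
      obtain ⟨K, hK1, hKform⟩ := pow2_form_u hirr hue2 hve2 hu0
      obtain ⟨L, hL1, hLform⟩ := pow2_form_v hirr hue2 hve2 hv0
      have hKL : K = 1 ∨ L = 1 := by
        by_contra hcon
        push_neg at hcon
        have hp4K : (4 : ℤ) ∣ 2 ^ K := by
          have h := pow_dvd_pow (2 : ℤ) (show 2 ≤ K by omega)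
          exact (show (4 : ℤ) = 2 ^ 2 by norm_num) ▸ h
        have hp4L : (4 : ℤ) ∣ 2 ^ L := by
          have h := pow_dvd_pow (2 : ℤ) (show 2 ≤ L by omega)
          exact (show (4 : ℤ) = 2 ^ 2 by norm_num) ▸ h
        obtain ⟨c, hc⟩ : (4 : ℤ) ∣ u a := by
          rcases hKform with h | h <;> rw [h]
          · exact hp4K
          · exact dvd_neg.2 hp4K
        obtain ⟨d, hd⟩ : (4 : ℤ) ∣ v a := by
          rcases hLform with h | h <;> rw [h]
          · exact hp4L
          · exact dvd_neg.2 hp4L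
        obtain ⟨f₁, hf1u, hf1v⟩ := exists_uv (s := 2) (t := 2) (by norm_num)
        obtain ⟨f₂, hf2u, hf2v⟩ := exists_uv (s := 2 * c) (t := 2 * d) ⟨c - d, by ring⟩
        have hfacf : a = f₁ * f₂ :=
          ext_uv (by rw [u_mul, hf1u, hf2u, hc]; ring) (by rw [v_mul, hf1v, hf2v, hd]; ring)
        rcases hirr.isUnit_or_isUnit hfacf with h | h <;> rw [isUnit_iff] at h
        · rw [hf1u] at h; rcases h.1 with h1 | h1 <;> omega
        · rw [hf2u] at h; rcases h.1 with h1 | h1 <;> omega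
      rcases hKL with hK | hL
      · -- K = 1 : second target, γ := L - 1
        refine ⟨L - 1, Or.inr ?_⟩
        set γ := L - 1 with hγdef
        have hLγ : L = γ + 1 := by omega
        set t₂ : ℤ√1 := ⟨2 ^ γ + 1, -(2 ^ γ - 1)⟩ with ht2def
        have ht2u : u t₂ = 2 := by simp [u, ht2def]; ring
        have ht2v : v t₂ = 2 ^ (γ + 1) := by simp [v, ht2def]; ring
        obtain ⟨ε, hε, hU⟩ : ∃ ε : ℤ, (ε = 1 ∨ ε = -1) ∧ u a = ε * 2 := by
          rcases hKform with h | h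
          · exact ⟨1, Or.inl rfl, by rw [h, hK]; ring⟩
          · exact ⟨-1, Or.inr rfl, by rw [h, hK]; ring⟩
        obtain ⟨δ, hδ, hV⟩ : ∃ δ : ℤ, (δ = 1 ∨ δ = -1) ∧ v a = δ * 2 ^ (γ + 1) := by
          rcases hLform with h | h
          · exact ⟨1, Or.inl rfl, by rw [h, hLγ]; ring⟩
          · exact ⟨-1, Or.inr rfl, by rw [h, hLγ]; ring⟩
        obtain ⟨w, hwu, hwv⟩ := exists_uv (s := ε) (t := δ)
          (by rcases hε with rfl | rfl <;> rcases hδ with rfl | rfl <;> norm_num)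
        have hw : IsUnit w := isUnit_iff.2 ⟨hwu ▸ hε, hwv ▸ hδ⟩
        have hfac : a = w * t₂ :=
          ext_uv (by rw [u_mul, hwu, ht2u, hU]) (by rw [v_mul, hwv, ht2v, hV])
        rw [hfac]
        exact associated_unit_mul_left t₂ w hw
      · -- L = 1 : first target, γ := K - 1
        refine ⟨K - 1, Or.inl ?_⟩
        set γ := K - 1 with hγdef
        have hKγ : K = γ + 1 := by omega
        set t₁ : ℤ√1 := ⟨2 ^ γ + 1, 2 ^ γ - 1⟩ with ht1def
        have ht1u : u t₁ = 2 ^ (γ + 1) := by simp [u, ht1def]; ring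
        have ht1v : v t₁ = 2 := by simp [v, ht1def]
        obtain ⟨ε, hε, hU⟩ : ∃ ε : ℤ, (ε = 1 ∨ ε = -1) ∧ u a = ε * 2 ^ (γ + 1) := by
          rcases hKform with h | h
          · exact ⟨1, Or.inl rfl, by rw [h, hKγ]; ring⟩
          · exact ⟨-1, Or.inr rfl, by rw [h, hKγ]; ring⟩
        obtain ⟨δ, hδ, hV⟩ : ∃ δ : ℤ, (δ = 1 ∨ δ = -1) ∧ v a = δ * 2 := by
          rcases hLform with h | h
          · exact ⟨1, Or.inl rfl, by rw [h, hL]; ring⟩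
          · exact ⟨-1, Or.inr rfl, by rw [h, hL]; ring⟩
        obtain ⟨w, hwu, hwv⟩ := exists_uv (s := ε) (t := δ)
          (by rcases hε with rfl | rfl <;> rcases hδ with rfl | rfl <;> norm_num)
        have hw : IsUnit w := isUnit_iff.2 ⟨hwu ▸ hε, hwv ▸ hδ⟩
        have hfac : a = w * t₁ :=
          ext_uv (by rw [u_mul, hwu, ht1u, hU]) (by rw [v_mul, hwv, ht1v, hV])
        rw [hfac]
        exact associated_unit_mul_left t₁ w hw
    · -- odd case : contradiction with ¬ Prime a
      exfalso
      have hva_odd : v a % 2 = 1 := by omega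
      obtain ⟨c₁, hc1u, hc1v⟩ := exists_uv (s := u a) (t := 1) (by omega)
      obtain ⟨c₂, hc2u, hc2v⟩ := exists_uv (s := 1) (t := v a) (by omega)
      have hfac : a = c₁ * c₂ :=
        ext_uv (by rw [u_mul, hc1u, hc2u]; ring) (by rw [v_mul, hc1v, hc2v]; ring)
      rcases hirr.isUnit_or_isUnit hfac with h | h <;> rw [isUnit_iff] at h
      · rw [hc1u, hc1v] at h
        have hu1 : u a = 1 ∨ u a = -1 := h.1
        have hvnot : ¬ (v a = 1 ∨ v a = -1) := fun hv =>
          hirr.not_isUnit (isUnit_iff.2 ⟨hu1, hv⟩)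
        have hirrv : Irreducible (v a) := by
          constructor
          · rw [Int.isUnit_iff]; exact hvnot
          · intro m n hmn
            have hmodd : ¬ 2 ∣ m := fun hd => by
              have : 2 ∣ v a := hmn ▸ dvd_mul_of_dvd_left hd n
              omega
            have hnodd : ¬ 2 ∣ n := fun hd => by
              have : 2 ∣ v a := hmn ▸ dvd_mul_of_dvd_right hd m
              omega
            obtain ⟨d₁, hd1u, hd1v⟩ := exists_uv (s := u a) (t := m)
              (by rcases hu1 with h1 | h1 <;> omega)
            obtain ⟨d₂, hd2u, hd2v⟩ := exists_uv (s := 1) (t := n) (by omega)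
            have hfd : a = d₁ * d₂ :=
              ext_uv (by rw [u_mul, hd1u, hd2u]; ring)
                (by rw [v_mul, hd1v, hd2v, hmn])
            rcases hirr.isUnit_or_isUnit hfd with hh | hh <;> rw [isUnit_iff] at hh
            · left; rw [Int.isUnit_iff, ← hd1v]; exact hh.2
            · right; rw [Int.isUnit_iff, ← hd2v]; exact hh.2
        exact hnp (prime_of_u (UniqueFactorizationMonoid.irreducible_iff_prime.1 hirrv) hu1)
      · rw [hc2u, hc2v] at h
        have hv1 : v a = 1 ∨ v a = -1 := h.2
        have hunot : ¬ (u a = 1 ∨ u a = -1) := fun hu =>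
          hirr.not_isUnit (isUnit_iff.2 ⟨hu, hv1⟩)
        have hirru : Irreducible (u a) := by
          constructor
          · rw [Int.isUnit_iff]; exact hunot
          · intro m n hmn
            have hmodd : ¬ 2 ∣ m := fun hd => by
              have : 2 ∣ u a := hmn ▸ dvd_mul_of_dvd_left hd n
              omega
            have hnodd : ¬ 2 ∣ n := fun hd => by
              have : 2 ∣ u a := hmn ▸ dvd_mul_of_dvd_right hd m
              omega
            obtain ⟨d₁, hd1u, hd1v⟩ := exists_uv (s := m) (t := 1) (by omega)
            obtain ⟨d₂, hd2u, hd2v⟩ := exists_uv (s := n) (t := v a)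
              (by rcases hv1 with h1 | h1 <;> omega)
            have hfd : a = d₁ * d₂ :=
              ext_uv (by rw [u_mul, hd1u, hd2u, hmn])
                (by rw [v_mul, hd1v, hd2v]; ring)
            rcases hirr.isUnit_or_isUnit hfd with hh | hh <;> rw [isUnit_iff] at hh
            · left; rw [Int.isUnit_iff, ← hd1u]; exact hh.1
            · right; rw [Int.isUnit_iff, ← hd2u]; exact hh.1
        exact hnp (prime_of_v (UniqueFactorizationMonoid.irreducible_iff_prime.1 hirru) hv1)
  · rintro ⟨γ, h | h⟩
    · set t₁ : ℤ√1 := ⟨2 ^ γ + 1, 2 ^ γ - 1⟩ with ht1def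
      have ht1u : u t₁ = 2 ^ (γ + 1) := by simp [u, ht1def]; ring
      have ht1v : v t₁ = 2 ^ (0 + 1) := by simp [v, ht1def]
      have hirrt : Irreducible t₁ := irr_even (Or.inr rfl) ht1u ht1v
      have hnpt : ¬ Prime t₁ :=
        not_prime_of_even (ht1u ▸ dvd_pow_self 2 (Nat.succ_ne_zero γ))
          (ht1v ▸ dvd_pow_self 2 (Nat.succ_ne_zero 0))
          (ht1u ▸ pow_ne_zero _ two_ne_zero) (ht1v ▸ pow_ne_zero _ two_ne_zero)
      exact ⟨h.symm.irreducible hirrt, fun hp => hnpt (h.prime hp)⟩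
    · set t₂ : ℤ√1 := ⟨2 ^ γ + 1, -(2 ^ γ - 1)⟩ with ht2def
      have ht2u : u t₂ = 2 ^ (0 + 1) := by simp [u, ht2def]; ring
      have ht2v : v t₂ = 2 ^ (γ + 1) := by simp [v, ht2def]; ring
      have hirrt : Irreducible t₂ := irr_even (Or.inl rfl) ht2u ht2v
      have hnpt : ¬ Prime t₂ :=
        not_prime_of_even (ht2u ▸ dvd_pow_self 2 (Nat.succ_ne_zero 0))
          (ht2v ▸ dvd_pow_self 2 (Nat.succ_ne_zero γ))
          (ht2u ▸ pow_ne_zero _ two_ne_zero) (ht2v ▸ pow_ne_zero _ two_ne_zero)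
      exact ⟨h.symm.irreducible hirrt, fun hp => hnpt (h.prime hp)⟩
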